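/- Hellinger stability of Gibbs posteriors: let (Ω, 𝓕, μ₀) be a probability space, let Φ₁, Φ₂ : Ω → [0,∞) be measurable with ∫ (Φ₁ − Φ₂)² dμ₀ < ∞, let Z_i = ∫ e^{−Φ_i} dμ₀, and suppose Z₁, Z₂ ≥ z for some 0 < z ≤ 1. Define the posterior densities p_i = e^{−Φ_i}/Z_i with respect to μ₀. Then ∫_Ω ( √(p₁) − √(p₂) )² dμ₀ ≤ z^{−3} ∫_Ω (Φ₁ − Φ₂)² dμ₀. -/

import Mathlib

open MeasureTheory

lemma exp_sub_exp_sq_le {x y : ℝ} (hx : 0 ≤ x) (hy : 0 ≤ y) :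
    (Real.exp (-x) - Real.exp (-y)) ^ 2 ≤ (x - y) ^ 2 := by
  have key : ∀ u v : ℝ, 0 ≤ u → u ≤ v → Real.exp (-u) - Real.exp (-v) ≤ v - u := by
    intro u v hu huv
    have h1 : Real.exp (u - v) ≥ 1 + (u - v) := by
      have := Real.add_one_le_exp (u - v); linarith
    have h2 : Real.exp (-v) = Real.exp (-u) * Real.exp (u - v) := by
      rw [← Real.exp_add]; ring_nf
    have h3 : Real.exp (-u) ≤ 1 := Real.exp_le_one_iff.mpr (by linarith)
    have h4 : Real.exp (-u) - Real.exp (-v) = Real.exp (-u) * (1 - Real.exp (u - v)) := by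
      rw [h2]; ring
    have h5 : (1 : ℝ) - Real.exp (u - v) ≤ v - u := by linarith
    have h6 : 0 ≤ (1 : ℝ) - Real.exp (u - v) ∨ (1 : ℝ) - Real.exp (u - v) < 0 :=
      le_or_gt _ _
    rcases h6 with h6 | h6
    · calc Real.exp (-u) - Real.exp (-v) = Real.exp (-u) * (1 - Real.exp (u - v)) := h4
        _ ≤ 1 * (1 - Real.exp (u - v)) := by
            exact mul_le_mul_of_nonneg_right h3 h6
        _ = 1 - Real.exp (u - v) := one_mul _
        _ ≤ v - u := h5
    · have : Real.exp (-u) * (1 - Real.exp (u - v)) ≤ 0 :=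
        mul_nonpos_of_nonneg_of_nonpos (Real.exp_nonneg _) h6.le
      linarith
  have habs : |Real.exp (-x) - Real.exp (-y)| ≤ |x - y| := by
    rcases le_total x y with h | h
    · have h1 := key x y hx h
      have h2 : Real.exp (-y) ≤ Real.exp (-x) := Real.exp_le_exp.mpr (by linarith)
      rw [abs_of_nonneg (by linarith), abs_of_nonpos (by linarith)]
      linarith
    · have h1 := key y x hy h
      have h2 : Real.exp (-x) ≤ Real.exp (-y) := Real.exp_le_exp.mpr (by linarith)
      rw [abs_of_nonpos (by linarith), abs_of_nonneg (by linarith)]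
      linarith
  calc (Real.exp (-x) - Real.exp (-y)) ^ 2 = |Real.exp (-x) - Real.exp (-y)| ^ 2 := by
        rw [sq_abs]
    _ ≤ |x - y| ^ 2 := pow_le_pow_left₀ (abs_nonneg _) habs 2
    _ = (x - y) ^ 2 := sq_abs _

/-- Hellinger stability of Gibbs posteriors: for measurable `Φ₁, Φ₂ : Ω → [0,∞)` with
`∫(Φ₁ − Φ₂)² dμ₀ < ∞` and normalizing constants `Z_i = ∫ e^{−Φ_i} dμ₀ ≥ z > 0`, the
posterior densities `p_i = e^{−Φ_i}/Z_i` satisfy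
`∫ (√p₁ − √p₂)² dμ₀ ≤ z^{−3} ∫ (Φ₁ − Φ₂)² dμ₀`. -/
theorem gibbs_posterior_hellinger_stability {Ω : Type*} [MeasurableSpace Ω]
    (μ₀ : Measure Ω) [IsProbabilityMeasure μ₀]
    (Φ₁ Φ₂ : Ω → ℝ) (hΦ₁m : Measurable Φ₁) (hΦ₂m : Measurable Φ₂)
    (hΦ₁ : ∀ x, 0 ≤ Φ₁ x) (hΦ₂ : ∀ x, 0 ≤ Φ₂ x)
    (hsq : Integrable (fun x => (Φ₁ x - Φ₂ x) ^ 2) μ₀)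
    (z : ℝ) (hz0 : 0 < z) (hz1 : z ≤ 1)
    (hZ₁ : z ≤ ∫ x, Real.exp (-Φ₁ x) ∂μ₀)
    (hZ₂ : z ≤ ∫ x, Real.exp (-Φ₂ x) ∂μ₀) :
    (∫ x,
        (Real.sqrt (Real.exp (-Φ₁ x) / ∫ y, Real.exp (-Φ₁ y) ∂μ₀) -
          Real.sqrt (Real.exp (-Φ₂ x) / ∫ y, Real.exp (-Φ₂ y) ∂μ₀)) ^ 2 ∂μ₀) ≤
      z⁻¹ ^ 3 * ∫ x, (Φ₁ x - Φ₂ x) ^ 2 ∂μ₀ := by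
  set Z₁ := ∫ x, Real.exp (-Φ₁ x) ∂μ₀ with hZ1def
  set Z₂ := ∫ x, Real.exp (-Φ₂ x) ∂μ₀ with hZ2def
  have hZ₁pos : 0 < Z₁ := lt_of_lt_of_le hz0 hZ₁
  have hZ₂pos : 0 < Z₂ := lt_of_lt_of_le hz0 hZ₂
  set a : Ω → ℝ := fun x => Real.exp (-(Φ₁ x) / 2) with hadef
  set b : Ω → ℝ := fun x => Real.exp (-(Φ₂ x) / 2) with hbdef
  set A := Real.sqrt Z₁ with hAdef
  set B := Real.sqrt Z₂ with hBdef
  have hApos : 0 < A := Real.sqrt_pos.mpr hZ₁pos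
  have hBpos : 0 < B := Real.sqrt_pos.mpr hZ₂pos
  have hA2 : A ^ 2 = Z₁ := Real.sq_sqrt hZ₁pos.le
  have hB2 : B ^ 2 = Z₂ := Real.sq_sqrt hZ₂pos.le
  have ham : Measurable a := (hΦ₁m.neg.div_const 2).exp
  have hbm : Measurable b := (hΦ₂m.neg.div_const 2).exp
  have ha_le : ∀ x, a x ≤ 1 := fun x =>
    Real.exp_le_one_iff.mpr (by have := hΦ₁ x; simp [hadef]; linarith)
  have hb_le : ∀ x, b x ≤ 1 := fun x =>
    Real.exp_le_one_iff.mpr (by have := hΦ₂ x; simp [hbdef]; linarith)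
  have ha_pos : ∀ x, 0 < a x := fun x => Real.exp_pos _
  have hb_pos : ∀ x, 0 < b x := fun x => Real.exp_pos _
  -- integrability of bounded measurable functions
  have hint : ∀ f : Ω → ℝ, Measurable f → (∀ x, |f x| ≤ 1) → Integrable f μ₀ := by
    intro f hm hb
    exact (integrable_const 1).mono' hm.aestronglyMeasurable
      (Filter.Eventually.of_forall fun x => by simpa using hb x)
  have hab_int : Integrable (fun x => a x * b x) μ₀ := by
    apply hint _ (ham.mul hbm)
    intro x
    show |a x * b x| ≤ 1
    rw [abs_of_nonneg (mul_nonneg (ha_pos x).le (hb_pos x).le)]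
    calc a x * b x ≤ 1 * 1 := mul_le_mul (ha_le x) (hb_le x) (hb_pos x).le zero_le_one
      _ = 1 := one_mul 1
  have ha2_int : Integrable (fun x => a x ^ 2) μ₀ := by
    apply hint _ (ham.pow_const 2)
    intro x
    rw [abs_of_nonneg (sq_nonneg _)]
    calc a x ^ 2 ≤ 1 ^ 2 := pow_le_pow_left₀ (ha_pos x).le (ha_le x) 2
      _ = 1 := one_pow 2
  have hb2_int : Integrable (fun x => b x ^ 2) μ₀ := by
    apply hint _ (hbm.pow_const 2)
    intro x
    rw [abs_of_nonneg (sq_nonneg _)]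
    calc b x ^ 2 ≤ 1 ^ 2 := pow_le_pow_left₀ (hb_pos x).le (hb_le x) 2
      _ = 1 := one_pow 2
  have hab_sq_int : Integrable (fun x => (a x - b x) ^ 2) μ₀ := by
    have : (fun x => (a x - b x) ^ 2) =
        fun x => a x ^ 2 + b x ^ 2 - 2 * (a x * b x) := by
      funext x; ring
    rw [this]
    exact (ha2_int.add hb2_int).sub (hab_int.const_mul 2)
  -- a² integrates to Z₁
  have hIa : ∫ x, a x ^ 2 ∂μ₀ = Z₁ := by
    rw [hZ1def]
    congr 1 with x
    rw [hadef, sq, ← Real.exp_add]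
    ring_nf
  have hIb : ∫ x, b x ^ 2 ∂μ₀ = Z₂ := by
    rw [hZ2def]
    congr 1 with x
    rw [hbdef, sq, ← Real.exp_add]
    ring_nf
  set t := ∫ x, a x * b x ∂μ₀ with htdef
  -- rewrite the integrand
  have hrw : (fun x =>
      (Real.sqrt (Real.exp (-Φ₁ x) / Z₁) - Real.sqrt (Real.exp (-Φ₂ x) / Z₂)) ^ 2) =
      fun x => (a x / A - b x / B) ^ 2 := by
    funext x
    have e1 : Real.sqrt (Real.exp (-Φ₁ x)) = a x := by
      rw [show -Φ₁ x = -(Φ₁ x) / 2 + -(Φ₁ x) / 2 by ring, Real.exp_add, ← sq,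
        Real.sqrt_sq (Real.exp_nonneg _)]
    have e2 : Real.sqrt (Real.exp (-Φ₂ x)) = b x := by
      rw [show -Φ₂ x = -(Φ₂ x) / 2 + -(Φ₂ x) / 2 by ring, Real.exp_add, ← sq,
        Real.sqrt_sq (Real.exp_nonneg _)]
    rw [Real.sqrt_div (Real.exp_nonneg _), Real.sqrt_div (Real.exp_nonneg _), e1, e2]
  -- expand the Hellinger integral
  have hexpand : (fun x => (a x / A - b x / B) ^ 2) =
      fun x => (A ^ 2)⁻¹ * a x ^ 2 + (B ^ 2)⁻¹ * b x ^ 2 - (2 / (A * B)) * (a x * b x) := by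
    funext x
    field_simp
    ring
  have hI : ∫ x, (a x / A - b x / B) ^ 2 ∂μ₀ = 2 - (2 / (A * B)) * t := by
    have hadd : Integrable (fun x => (A ^ 2)⁻¹ * a x ^ 2 + (B ^ 2)⁻¹ * b x ^ 2) μ₀ :=
      (ha2_int.const_mul ((A ^ 2)⁻¹)).add (hb2_int.const_mul ((B ^ 2)⁻¹))
    rw [hexpand]
    rw [integral_sub hadd (hab_int.const_mul (2 / (A * B)))]
    rw [integral_add (ha2_int.const_mul ((A ^ 2)⁻¹)) (hb2_int.const_mul ((B ^ 2)⁻¹))]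
    rw [integral_const_mul, integral_const_mul, integral_const_mul, hIa, hIb, ← htdef,
      ← hA2, ← hB2]
    field_simp
    ring
  -- S = ∫ (a-b)²
  set S := ∫ x, (a x - b x) ^ 2 ∂μ₀ with hSdef
  have hS : S = Z₁ + Z₂ - 2 * t := by
    rw [hSdef]
    have : (fun x => (a x - b x) ^ 2) =
        fun x => a x ^ 2 + b x ^ 2 - 2 * (a x * b x) := by funext x; ring
    have hadd2 : Integrable (fun x => a x ^ 2 + b x ^ 2) μ₀ := ha2_int.add hb2_int
    rw [this]
    rw [integral_sub hadd2 (hab_int.const_mul 2)]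
    rw [integral_add ha2_int hb2_int]
    rw [integral_const_mul, hIa, hIb, ← htdef]
  have hSnonneg : 0 ≤ S := integral_nonneg fun x => sq_nonneg _
  set D := ∫ x, (Φ₁ x - Φ₂ x) ^ 2 ∂μ₀ with hDdef
  have hDnonneg : 0 ≤ D := integral_nonneg fun x => sq_nonneg _
  -- S ≤ D/4 via pointwise bound
  have hSD : S ≤ D / 4 := by
    have hpt : ∀ x, (a x - b x) ^ 2 ≤ (Φ₁ x - Φ₂ x) ^ 2 / 4 := by
      intro x
      have := exp_sub_exp_sq_le (x := Φ₁ x / 2) (y := Φ₂ x / 2)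
        (by linarith [hΦ₁ x]) (by linarith [hΦ₂ x])
      have e1 : a x = Real.exp (-(Φ₁ x / 2)) := by rw [hadef]; ring_nf
      have e2 : b x = Real.exp (-(Φ₂ x / 2)) := by rw [hbdef]; ring_nf
      rw [e1, e2]
      calc (Real.exp (-(Φ₁ x / 2)) - Real.exp (-(Φ₂ x / 2))) ^ 2
          ≤ (Φ₁ x / 2 - Φ₂ x / 2) ^ 2 := this
        _ = (Φ₁ x - Φ₂ x) ^ 2 / 4 := by ring
    calc S ≤ ∫ x, (Φ₁ x - Φ₂ x) ^ 2 / 4 ∂μ₀ :=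
        integral_mono hab_sq_int (hsq.div_const 4) hpt
      _ = D / 4 := by rw [integral_div]
  -- AB ≥ z
  have hABz : z ≤ A * B := by
    have h1 : Real.sqrt z ≤ A := Real.sqrt_le_sqrt hZ₁
    have h2 : Real.sqrt z ≤ B := Real.sqrt_le_sqrt hZ₂
    calc z = Real.sqrt z * Real.sqrt z := (Real.mul_self_sqrt hz0.le).symm
      _ ≤ A * B := mul_le_mul h1 h2 (Real.sqrt_nonneg _) hApos.le
  have hABpos : 0 < A * B := mul_pos hApos hBpos
  -- main chain
  rw [hrw, hI]
  have step1 : 2 - (2 / (A * B)) * t ≤ S / (A * B) := by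
    rw [hS, le_div_iff₀ hABpos]
    have hAB2 : 2 * (A * B) ≤ Z₁ + Z₂ := by
      rw [← hA2, ← hB2]; nlinarith [two_mul_le_add_sq A B]
    have hcancel : 2 / (A * B) * t * (A * B) = 2 * t := by field_simp
    calc (2 - 2 / (A * B) * t) * (A * B)
        = 2 * (A * B) - 2 / (A * B) * t * (A * B) := by ring
      _ = 2 * (A * B) - 2 * t := by rw [hcancel]
      _ ≤ Z₁ + Z₂ - 2 * t := by linarith
  have step2 : S / (A * B) ≤ S / z := by gcongr
  have step3 : S / z ≤ D / 4 / z := by gcongr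
  have step4 : D / 4 / z ≤ z⁻¹ ^ 3 * D := by
    have hzpow : 0 < z ^ 3 := pow_pos hz0 3
    have he : z⁻¹ ^ 3 * D = D / z ^ 3 := by
      rw [inv_pow, inv_mul_eq_div]
    rw [he, div_div]
    have hle : z ^ 3 ≤ 4 * z := by nlinarith [mul_pos hz0 hz0, sq_nonneg z]
    exact div_le_div_of_nonneg_left hDnonneg hzpow hle
  linarith
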